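/- Let (X,S) be a non-degenerate symmetric solution with structure monoid M(X,S), Garside element Δ, and signed representation ψ. If a divides Δ, then for every x ∈ X: ψ_a(x) = −φ_a(x) if x right-divides a, and ψ_a(x) = φ_a(x) otherwise. Consequently n(ψ_a) = ℓ(a), and the restriction of ψ to the set of divisors of Δ is injective. -/

import Mathlib

/-- The defining relations of the structure monoid: `x y = g_x(y) f_y(x)`. -/
def structRel {X : Type*} (g f : X → X → X) :
    FreeMonoid X → FreeMonoid X → Prop :=
  fun a b => ∃ x y : X, a = FreeMonoid.of x * FreeMonoid.of y ∧
    b = FreeMonoid.of (g x y) * FreeMonoid.of (f y x)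

/-- `S` acting on the first two components of `X³`. -/
def S12 {X : Type*} (S : X × X → X × X) : X × X × X → X × X × X :=
  fun p => ((S (p.1, p.2.1)).1, (S (p.1, p.2.1)).2, p.2.2)

/-- `S` acting on the last two components of `X³`. -/
def S23 {X : Type*} (S : X × X → X × X) : X × X × X → X × X × X :=
  fun p => (p.1, (S (p.2.1, p.2.2)).1, (S (p.2.1, p.2.2)).2)

/-- The braid relation `S¹²S²³S¹² = S²³S¹²S²³`. -/
def Braided {X : Type*} (S : X × X → X × X) : Prop :=
  S12 S ∘ S23 S ∘ S12 S = S23 S ∘ S12 S ∘ S23 S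

/-- The signed permutation matrix `ψ_x` on `V = ℝ^X`: the basis vector `y` is sent to
`φ_x(y) = f_x⁻¹(y)` when `y ≠ x`, and `x` is sent to `-φ_x(x)`. -/
noncomputable def psiMat {X : Type*} [DecidableEq X] [Nonempty X]
    (f : X → X → X) (x : X) : Matrix X X ℝ :=
  Matrix.of fun z y =>
    if z = Function.invFun (f x) y then (if y = x then (-1 : ℝ) else 1) else 0

/-- `n(ρ) = #{x ∈ X : ρ(x) ∉ X}` : the number of basis vectors whose image under `ρ` is not a
(positive) basis vector. -/
noncomputable def nneg {X : Type*} [DecidableEq X] (ρ : Matrix X X ℝ) : ℕ :=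
  Set.ncard {x : X | ∀ z : X, (fun w => ρ w x) ≠ Pi.single z (1 : ℝ)}


namespace Stmt12Aux

@[ext]
structure Coc (X : Type*) where
  perm : Equiv.Perm X
  permL : Equiv.Perm X
  vec : X → ℕ
  vecL : X → ℕ

variable {X : Type*}

def Coc.mul (a b : Coc X) : Coc X :=
  ⟨a.perm * b.perm, a.permL * b.permL,
    fun t => a.vec (b.perm t) + b.vec t,
    fun t => a.vecL t + b.vecL (a.permL⁻¹ t)⟩

instance : Monoid (Coc X) where
  one := ⟨1, 1, 0, 0⟩
  mul := Coc.mul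
  mul_assoc a b c := by
    show Coc.mul (Coc.mul a b) c = Coc.mul a (Coc.mul b c)
    unfold Coc.mul
    ext t <;>
      simp [mul_assoc, add_assoc, Equiv.Perm.mul_apply, mul_inv_rev]
  one_mul a := by
    show Coc.mul ⟨1, 1, 0, 0⟩ a = a
    unfold Coc.mul
    ext t <;> simp
  mul_one a := by
    show Coc.mul a ⟨1, 1, 0, 0⟩ = a
    unfold Coc.mul
    ext t <;> simp

@[simp] theorem mul_perm (a b : Coc X) : (a * b).perm = a.perm * b.perm := rfl
@[simp] theorem mul_permL (a b : Coc X) : (a * b).permL = a.permL * b.permL := rfl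
@[simp] theorem mul_vec (a b : Coc X) (t : X) :
    (a * b).vec t = a.vec (b.perm t) + b.vec t := rfl
@[simp] theorem mul_vecL (a b : Coc X) (t : X) :
    (a * b).vecL t = a.vecL t + b.vecL (a.permL⁻¹ t) := rfl
@[simp] theorem one_perm : (1 : Coc X).perm = 1 := rfl
@[simp] theorem one_permL : (1 : Coc X).permL = 1 := rfl
@[simp] theorem one_vec (t : X) : (1 : Coc X).vec t = 0 := rfl
@[simp] theorem one_vecL (t : X) : (1 : Coc X).vecL t = 0 := rfl

def permHom : Coc X →* Equiv.Perm X where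
  toFun := Coc.perm
  map_one' := rfl
  map_mul' _ _ := rfl

section Sol

variable {S : X × X → X × X} {g f : X → X → X}

theorem inv1 (hS : ∀ x y : X, S (x, y) = (g x y, f y x)) (hinv : ∀ p : X × X, S (S p) = p)
    (x y : X) : g (g x y) (f y x) = x := by
  have h := hinv (x, y)
  rw [hS, hS] at h
  exact congrArg Prod.fst h

theorem inv2 (hS : ∀ x y : X, S (x, y) = (g x y, f y x)) (hinv : ∀ p : X × X, S (S p) = p)
    (x y : X) : f (f y x) (g x y) = y := by
  have h := hinv (x, y)
  rw [hS, hS] at h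
  exact congrArg Prod.snd h

theorem br1 (hS : ∀ x y : X, S (x, y) = (g x y, f y x))
    (hbr : Braided S) (x y z : X) :
    g x (g y z) = g (g x y) (g (f y x) z) := by
  have h := congrFun hbr (x, y, z)
  simp only [Function.comp_apply, S12, S23, hS] at h
  exact (congrArg Prod.fst h).symm

theorem br3 (hS : ∀ x y : X, S (x, y) = (g x y, f y x))
    (hbr : Braided S) (x y z : X) :
    f z (f y x) = f (f z y) (f (g y z) x) := by
  have h := congrFun hbr (x, y, z)
  simp only [Function.comp_apply, S12, S23, hS] at h
  exact congrArg (fun p => p.2.2) h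

theorem relM (g f : X → X → X) (x y : X) :
    PresentedMonoid.of (structRel g f) x * PresentedMonoid.of (structRel g f) y
      = PresentedMonoid.of (structRel g f) (g x y)
        * PresentedMonoid.of (structRel g f) (f y x) := by
  have h : (conGen (structRel g f)) (FreeMonoid.of x * FreeMonoid.of y)
      (FreeMonoid.of (g x y) * FreeMonoid.of (f y x)) :=
    ConGen.Rel.of _ _ ⟨x, y, rfl, rfl⟩
  exact Quotient.sound h

noncomputable def phi (hf : ∀ x : X, Function.Bijective (f x)) (y : X) : Equiv.Perm X :=
  (Equiv.ofBijective (f y) (hf y)).symm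

theorem f_phi (hf : ∀ x : X, Function.Bijective (f x)) (y t : X) :
    f y (phi hf y t) = t :=
  (Equiv.ofBijective (f y) (hf y)).apply_symm_apply t

theorem phi_eq_iff (hf : ∀ x : X, Function.Bijective (f x)) (y t x : X) :
    phi hf y t = x ↔ t = f y x :=
  Equiv.symm_apply_eq _

noncomputable def gam (hg : ∀ x : X, Function.Bijective (g x)) (z : X) : Equiv.Perm X :=
  Equiv.ofBijective (g z) (hg z)

theorem gam_inv_eq_iff (hg : ∀ x : X, Function.Bijective (g x)) (z t y : X) :
    (gam hg z)⁻¹ t = y ↔ t = g z y := by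
  rw [Equiv.Perm.inv_def, Equiv.symm_apply_eq]
  rfl

variable [DecidableEq X]

def evec (x : X) : X → ℕ := fun t => if t = x then 1 else 0

/-- the atom image in the cocycle monoid -/
noncomputable def atomC (hg : ∀ x : X, Function.Bijective (g x))
    (hf : ∀ x : X, Function.Bijective (f x)) (x : X) : Coc X :=
  ⟨phi hf x, gam hg x, evec x, evec x⟩

theorem atom_rel (hS : ∀ x y : X, S (x, y) = (g x y, f y x))
    (hg : ∀ x : X, Function.Bijective (g x)) (hf : ∀ x : X, Function.Bijective (f x))
    (hinv : ∀ p : X × X, S (S p) = p) (hbr : Braided S) (x y : X) :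
    atomC hg hf x * atomC hg hf y = atomC hg hf (g x y) * atomC hg hf (f y x) := by
  ext t
  · -- perm component
    show (phi hf x * phi hf y) t = (phi hf (g x y) * phi hf (f y x)) t
    have key : Equiv.ofBijective (f y) (hf y) * Equiv.ofBijective (f x) (hf x)
        = Equiv.ofBijective (f (f y x)) (hf _) * Equiv.ofBijective (f (g x y)) (hf _) := by
      ext s
      exact br3 hS hbr s x y
    have : phi hf x * phi hf y = phi hf (g x y) * phi hf (f y x) := by
      apply inv_injective
      rw [mul_inv_rev, mul_inv_rev]
      simp only [phi, Equiv.Perm.inv_def, Equiv.symm_symm]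
      exact key
    rw [this]
  · -- permL component
    show (gam hg x * gam hg y) t = (gam hg (g x y) * gam hg (f y x)) t
    simp only [Equiv.Perm.mul_apply, gam, Equiv.ofBijective_apply]
    exact br1 hS hbr x y t
  · -- vec component
    show evec x ((atomC hg hf y).perm t) + evec y t
        = evec (g x y) ((atomC hg hf (f y x)).perm t) + evec (f y x) t
    show evec x (phi hf y t) + evec y t
        = evec (g x y) (phi hf (f y x) t) + evec (f y x) t
    simp only [evec]
    rw [if_congr (phi_eq_iff hf y t x) rfl rfl,
      if_congr (phi_eq_iff hf (f y x) t (g x y)) rfl rfl, inv2 hS hinv]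
    split_ifs <;> omega
  · -- vecL component
    show evec x t + evec y ((gam hg x)⁻¹ t)
        = evec (g x y) t + evec (f y x) ((gam hg (g x y))⁻¹ t)
    simp only [evec]
    rw [if_congr (gam_inv_eq_iff hg x t y) rfl rfl,
      if_congr (gam_inv_eq_iff hg (g x y) t (f y x)) rfl rfl, inv1 hS hinv]
    split_ifs <;> omega

noncomputable def theta (hS : ∀ x y : X, S (x, y) = (g x y, f y x))
    (hg : ∀ x : X, Function.Bijective (g x)) (hf : ∀ x : X, Function.Bijective (f x))
    (hinv : ∀ p : X × X, S (S p) = p) (hbr : Braided S) :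
    PresentedMonoid (structRel g f) →* Coc X :=
  PresentedMonoid.lift (atomC hg hf) (by
    rintro a b ⟨x, y, rfl, rfl⟩
    simp only [map_mul, FreeMonoid.lift_eval_of]
    exact atom_rel hS hg hf hinv hbr x y)

@[simp] theorem theta_of (hS : ∀ x y : X, S (x, y) = (g x y, f y x))
    (hg : ∀ x : X, Function.Bijective (g x)) (hf : ∀ x : X, Function.Bijective (f x))
    (hinv : ∀ p : X × X, S (S p) = p) (hbr : Braided S) (x : X) :
    theta hS hg hf hinv hbr (PresentedMonoid.of (structRel g f) x) = atomC hg hf x := rfl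

end Sol

end Stmt12Aux


open Stmt12Aux in
open scoped Classical in
theorem stmt_12' {X : Type*} [Fintype X] [DecidableEq X] [Nonempty X]
    (S : X × X → X × X) (g f : X → X → X)
    (hS : ∀ x y : X, S (x, y) = (g x y, f y x))
    (hg : ∀ x : X, Function.Bijective (g x))
    (hf : ∀ x : X, Function.Bijective (f x))
    (hinv : ∀ p : X × X, S (S p) = p)
    (hbr : Braided S)
    (Δ : PresentedMonoid (structRel g f))
    (hΔdvd : ∀ x : X, PresentedMonoid.of (structRel g f) x ∣ Δ)
    (hΔlcm : ∀ m : PresentedMonoid (structRel g f),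
      (∀ x : X, PresentedMonoid.of (structRel g f) x ∣ m) → Δ ∣ m)
    (Φ : PresentedMonoid (structRel g f) →* Equiv.Perm X)
    (hΦ : ∀ x : X, Φ (PresentedMonoid.of (structRel g f) x)
      = (Equiv.ofBijective (f x) (hf x)).symm)
    (Ψ : PresentedMonoid (structRel g f) →* Matrix X X ℝ)
    (hΨ : ∀ x : X, Ψ (PresentedMonoid.of (structRel g f) x) = psiMat f x) :
    (∀ a : PresentedMonoid (structRel g f), a ∣ Δ →
        (∀ x : X, (fun w => Ψ a w x) =
          (if ∃ b, a = b * PresentedMonoid.of (structRel g f) x then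
            -(Pi.single (Φ a x) (1 : ℝ)) else Pi.single (Φ a x) (1 : ℝ))) ∧
        ∀ w : FreeMonoid X, PresentedMonoid.mk (structRel g f) w = a →
          nneg (Ψ a) = w.length) ∧
      ∀ a b : PresentedMonoid (structRel g f), a ∣ Δ → b ∣ Δ → Ψ a = Ψ b → a = b := by
  set Θ := theta hS hg hf hinv hbr with hΘdef
  set mkl : List X → PresentedMonoid (structRel g f) :=
    fun l => PresentedMonoid.mk (structRel g f) (FreeMonoid.ofList l) with hmkldef
  -- basic word facts
  have hmkl_nil : mkl [] = 1 := rfl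
  have hmkl_cons : ∀ (x : X) (l : List X),
      mkl (x :: l) = PresentedMonoid.of (structRel g f) x * mkl l := fun _ _ => rfl
  have hmkl_app : ∀ (l : List X) (y : X),
      mkl (l ++ [y]) = mkl l * PresentedMonoid.of (structRel g f) y := by
    intro l y
    rw [hmkldef]
    show PresentedMonoid.mk _ (FreeMonoid.ofList (l ++ [y])) = _
    rw [show FreeMonoid.ofList (l ++ [y])
      = FreeMonoid.ofList l * FreeMonoid.ofList [y] from rfl, map_mul]
    rfl
  have hsur : ∀ a : PresentedMonoid (structRel g f), ∃ l : List X, mkl l = a := by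
    intro a
    obtain ⟨w, hw⟩ := PresentedMonoid.surjective_mk a
    exact ⟨FreeMonoid.toList w, by rw [hmkldef]; simpa [FreeMonoid.ofList_toList] using hw⟩
  -- components of Θ
  have hPΦ : ∀ a, (Θ a).perm = Φ a := by
    have h : (permHom.comp Θ) = Φ := by
      apply PresentedMonoid.ext
      intro x
      show (Θ (PresentedMonoid.of (structRel g f) x)).perm = Φ (PresentedMonoid.of _ x)
      rw [hΦ, hΘdef, theta_of]
      rfl
    intro a
    exact congrArg (fun F => F a) h ▸ (DFunLike.congr_fun h a)
  have hvec_mul : ∀ a b t, (Θ (a * b)).vec t = (Θ a).vec ((Θ b).perm t) + (Θ b).vec t := by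
    intro a b t; rw [map_mul]; rfl
  have hvecL_mul : ∀ a b t, (Θ (a * b)).vecL t = (Θ a).vecL t + (Θ b).vecL ((Θ a).permL⁻¹ t) := by
    intro a b t; rw [map_mul]; rfl
  have hof_vec : ∀ x t, (Θ (PresentedMonoid.of (structRel g f) x)).vec t = evec x t :=
    fun _ _ => rfl
  have hof_vecL : ∀ x t, (Θ (PresentedMonoid.of (structRel g f) x)).vecL t = evec x t :=
    fun _ _ => rfl
  have hof_perm : ∀ x, (Θ (PresentedMonoid.of (structRel g f) x)).perm = phi hf x :=
    fun _ => rfl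
  -- lengths
  have hlen_mul : ∀ a b, (∑ t, (Θ (a * b)).vec t)
      = (∑ t, (Θ a).vec t) + ∑ t, (Θ b).vec t := by
    intro a b
    simp only [hvec_mul, Finset.sum_add_distrib]
    congr 1
    exact Equiv.sum_comp (Θ b).perm (Θ a).vec
  have hlenL_mul : ∀ a b, (∑ t, (Θ (a * b)).vecL t)
      = (∑ t, (Θ a).vecL t) + ∑ t, (Θ b).vecL t := by
    intro a b
    simp only [hvecL_mul, Finset.sum_add_distrib]
    congr 1
    exact Equiv.sum_comp ((Θ a).permL⁻¹) (Θ b).vecL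
  have hlen_of : ∀ x : X, (∑ t, (Θ (PresentedMonoid.of (structRel g f) x)).vec t) = 1 := by
    intro x
    simp [hof_vec, evec]
  have hlenL_of : ∀ x : X, (∑ t, (Θ (PresentedMonoid.of (structRel g f) x)).vecL t) = 1 := by
    intro x
    simp [hof_vecL, evec]
  have hlen_one : (∑ t, (Θ 1).vec t) = 0 := by simp [map_one]
  have hlenL_one : (∑ t, (Θ 1).vecL t) = 0 := by simp [map_one]
  have hlen_mkl : ∀ l : List X, (∑ t, (Θ (mkl l)).vec t) = l.length := by
    intro l
    induction l with
    | nil => rw [hmkl_nil]; exact hlen_one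
    | cons x l ih => rw [hmkl_cons, hlen_mul, hlen_of, ih, List.length_cons]; omega
  have hlenL_mkl : ∀ l : List X, (∑ t, (Θ (mkl l)).vecL t) = l.length := by
    intro l
    induction l with
    | nil => rw [hmkl_nil]; exact hlenL_one
    | cons x l ih => rw [hmkl_cons, hlenL_mul, hlenL_of, ih, List.length_cons]; omega
  -- right divisibility vs vec
  have hRD2 : ∀ (b : PresentedMonoid (structRel g f)) (x : X),
      1 ≤ (Θ (b * PresentedMonoid.of (structRel g f) x)).vec x := by
    intro b x
    rw [hvec_mul, hof_vec]
    simp [evec]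
  have hRD1l : ∀ (l : List X) (x : X),
      1 ≤ (Θ (mkl l)).vec x → ∃ b, mkl l = b * PresentedMonoid.of (structRel g f) x := by
    intro l
    induction l using List.reverseRecOn with
    | nil => intro x hx; rw [hmkl_nil] at hx; simp [map_one] at hx
    | append_singleton l y ih =>
      intro x hx
      rw [hmkl_app] at hx ⊢
      rw [hvec_mul, hof_vec, hof_perm] at hx
      by_cases hxy : x = y
      · exact ⟨mkl l, by rw [hxy]⟩
      · have h1 : 1 ≤ (Θ (mkl l)).vec (phi hf y x) := by
          simpa [evec, hxy] using hx
        obtain ⟨b, hb⟩ := ih (phi hf y x) h1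
        refine ⟨b * PresentedMonoid.of (structRel g f) (g (phi hf y x) y), ?_⟩
        rw [hb, mul_assoc, mul_assoc, relM g f (phi hf y x) y, f_phi hf y x]
  have hRD1 : ∀ (a : PresentedMonoid (structRel g f)) (x : X),
      1 ≤ (Θ a).vec x → ∃ b, a = b * PresentedMonoid.of (structRel g f) x := by
    intro a x hx
    obtain ⟨l, rfl⟩ := hsur a
    exact hRD1l l x hx
  -- left divisibility
  have hLD : ∀ (a : PresentedMonoid (structRel g f)) (z : X),
      PresentedMonoid.of (structRel g f) z ∣ a → 1 ≤ (Θ a).vecL z := by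
    rintro a z ⟨c, rfl⟩
    rw [hvecL_mul, hof_vecL]
    simp [evec]
  -- common multiples
  have hCM : ∀ (l : List X) (z : X), ∃ (y : X) (c : PresentedMonoid (structRel g f)),
      mkl l * PresentedMonoid.of (structRel g f) y = PresentedMonoid.of (structRel g f) z * c := by
    intro l
    induction l with
    | nil => intro z; exact ⟨z, 1, by rw [hmkl_nil, one_mul, mul_one]⟩
    | cons x l ih =>
      intro z
      obtain ⟨y, c, hyc⟩ := ih (f ((gam hg z)⁻¹ x) z)
      refine ⟨y, PresentedMonoid.of (structRel g f) ((gam hg z)⁻¹ x) * c, ?_⟩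
      have hgz : g z ((gam hg z)⁻¹ x) = x := by
        have := (gam hg z).apply_symm_apply x
        exact this
      calc mkl (x :: l) * PresentedMonoid.of (structRel g f) y
          = PresentedMonoid.of (structRel g f) x * (mkl l * PresentedMonoid.of (structRel g f) y) := by
            rw [hmkl_cons, mul_assoc]
        _ = PresentedMonoid.of (structRel g f) x
            * (PresentedMonoid.of (structRel g f) (f ((gam hg z)⁻¹ x) z) * c) := by rw [hyc]
        _ = (PresentedMonoid.of (structRel g f) (g z ((gam hg z)⁻¹ x))
            * PresentedMonoid.of (structRel g f) (f ((gam hg z)⁻¹ x) z)) * c := by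
            rw [hgz, mul_assoc]
        _ = (PresentedMonoid.of (structRel g f) z
            * PresentedMonoid.of (structRel g f) ((gam hg z)⁻¹ x)) * c := by
            rw [relM g f z ((gam hg z)⁻¹ x)]
        _ = PresentedMonoid.of (structRel g f) z
            * (PresentedMonoid.of (structRel g f) ((gam hg z)⁻¹ x) * c) := by rw [mul_assoc]
  have hMul : ∀ L : List X, ∃ w : List X, w.length = L.length ∧
      ∀ z ∈ L, PresentedMonoid.of (structRel g f) z ∣ mkl w := by
    intro L
    induction L with
    | nil => exact ⟨[], rfl, by simp⟩
    | cons z L ih =>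
      obtain ⟨w, hlw, hdvd⟩ := ih
      obtain ⟨y, c, hyc⟩ := hCM w z
      refine ⟨w ++ [y], by simp [hlw], ?_⟩
      intro z' hz'
      rw [hmkl_app]
      rcases List.mem_cons.mp hz' with h | h
      · exact ⟨c, by rw [h, hyc]⟩
      · exact Dvd.dvd.mul_right (hdvd z' h) _
  -- length of Δ
  have hlΔ : (∑ t, (Θ Δ).vec t) ≤ Fintype.card X := by
    obtain ⟨w, hlw, hdvd⟩ := hMul Finset.univ.toList
    obtain ⟨c, hc⟩ := hΔlcm (mkl w) (fun x => hdvd x (by simp [Finset.mem_toList]))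
    have h1 := hlen_mkl w
    rw [hc, hlen_mul] at h1
    rw [hlw, Finset.length_toList, Finset.card_univ] at h1
    omega
  have hsum_eq : ∀ a : PresentedMonoid (structRel g f),
      (∑ t, (Θ a).vecL t) = ∑ t, (Θ a).vec t := by
    intro a
    obtain ⟨l, rfl⟩ := hsur a
    rw [hlen_mkl, hlenL_mkl]
  have hD'Δ : ∀ z, (Θ Δ).vecL z = 1 := by
    have hge : ∀ z, 1 ≤ (Θ Δ).vecL z := fun z => hLD Δ z (hΔdvd z)
    have hsum : (∑ t, (Θ Δ).vecL t) ≤ Fintype.card X := by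
      rw [hsum_eq]; exact hlΔ
    intro z
    by_contra h
    have h2 : 2 ≤ (Θ Δ).vecL z := by have := hge z; omega
    have hlt : (∑ _t : X, 1) < ∑ t, (Θ Δ).vecL t :=
      Finset.sum_lt_sum (fun i _ => hge i) ⟨z, Finset.mem_univ z, by omega⟩
    rw [Finset.sum_const, Finset.card_univ, smul_eq_mul, mul_one] at hlt
    omega
  -- the key lemma : vecL ≤ 1 implies vec ≤ 1
  have hgid : ∀ y : X, g (phi hf y y) y = phi hf y y := by
    intro y
    have hfyu : f y (phi hf y y) = y := f_phi hf y y
    have h2 := inv2 hS hinv (phi hf y y) y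
    rw [hfyu] at h2
    exact (hf y).injective (by rw [h2, hfyu])
  have hkey : ∀ (k : ℕ) (a : PresentedMonoid (structRel g f)),
      (∑ t, (Θ a).vec t) = k → (∀ t, (Θ a).vecL t ≤ 1) → ∀ t, (Θ a).vec t ≤ 1 := by
    intro k
    induction k with
    | zero =>
      intro a ha _ t
      have h := (Finset.sum_eq_zero_iff.mp ha) t (Finset.mem_univ t)
      omega
    | succ k ih =>
      intro a ha hL
      obtain ⟨l, rfl⟩ := hsur a
      rcases List.eq_nil_or_concat' l with rfl | ⟨l', y, rfl⟩
      · rw [hlen_mkl] at ha; simp at ha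
      · rw [hmkl_app] at ha hL ⊢
        have hb_le : ∀ t, (Θ (mkl l')).vecL t ≤ 1 := by
          intro t
          have := hL t
          rw [hvecL_mul] at this
          omega
        have hlb : (∑ t, (Θ (mkl l')).vec t) = k := by
          have h1 := hlen_mkl (l' ++ [y])
          rw [hmkl_app] at h1
          have h2 := hlen_mkl l'
          rw [List.length_append, List.length_singleton] at h1
          omega
        have hDb := ih (mkl l') hlb hb_le
        have hzero : (Θ (mkl l')).vec (phi hf y y) = 0 := by
          by_contra h0
          obtain ⟨c, hc⟩ := hRD1 (mkl l') (phi hf y y) (by omega)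
          have hDuy : (Θ (PresentedMonoid.of (structRel g f) (phi hf y y)
              * PresentedMonoid.of (structRel g f) y)).vecL (phi hf y y) = 2 := by
            rw [hvecL_mul, hof_vecL, hof_vecL]
            have h3 : (gam hg (phi hf y y))⁻¹ (phi hf y y) = y := by
              rw [gam_inv_eq_iff]
              exact (hgid y).symm
            have h4 : (Θ (PresentedMonoid.of (structRel g f) (phi hf y y))).permL
                = gam hg (phi hf y y) := rfl
            rw [h4, h3]
            simp [evec]
          have hcontra : 2 ≤ (Θ (mkl l' * PresentedMonoid.of (structRel g f) y)).vecL
              ((Θ c).permL (phi hf y y)) := by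
            rw [hc, mul_assoc, hvecL_mul]
            rw [show ∀ (e : Equiv.Perm X) (x : X), e⁻¹ (e x) = x from fun e x => e.symm_apply_apply x]
            rw [hDuy]
            omega
          have := hL ((Θ c).permL (phi hf y y))
          omega
        intro t
        rw [hvec_mul, hof_vec, hof_perm]
        by_cases hty : t = y
        · subst hty
          rw [hzero]
          simp [evec]
        · have := hDb (phi hf y t)
          simp [evec, hty]
          omega
  have hDdvd : ∀ a : PresentedMonoid (structRel g f), a ∣ Δ → ∀ t, (Θ a).vec t ≤ 1 := by
    have hDΔ : ∀ t, (Θ Δ).vec t ≤ 1 :=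
      hkey (∑ t, (Θ Δ).vec t) Δ rfl (fun t => le_of_eq (hD'Δ t))
    rintro a ⟨c, rfl⟩ t
    have h := hDΔ (((Θ c).perm)⁻¹ t)
    rw [hvec_mul] at h
    rw [show ∀ (e : Equiv.Perm X) (x : X), e (e⁻¹ x) = x from fun e x => e.apply_symm_apply x] at h
    omega
  -- column lemma
  have hinvFun : ∀ y x : X, Function.invFun (f y) x = phi hf y x := by
    intro y x
    apply (hf y).injective
    rw [f_phi hf y x]
    exact Function.invFun_eq ⟨phi hf y x, f_phi hf y x⟩
  have hpsi_col : ∀ y t x : X, psiMat f y t x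
      = if t = phi hf y x then (if x = y then (-1 : ℝ) else 1) else 0 := by
    intro y t x
    show (if t = Function.invFun (f y) x then (if x = y then (-1 : ℝ) else 1) else 0) = _
    rw [hinvFun]
  have hCLl : ∀ (l : List X) (x : X), (fun w => Ψ (mkl l) w x)
      = ((-1 : ℝ) ^ ((Θ (mkl l)).vec x)) • (Pi.single (Φ (mkl l) x) (1 : ℝ) : X → ℝ) := by
    intro l
    induction l using List.reverseRecOn with
    | nil =>
      intro x
      rw [hmkl_nil, map_one, map_one, map_one]
      funext w
      simp [Matrix.one_apply, Pi.single_apply]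
    | append_singleton l y ih =>
      intro x
      rw [hmkl_app]
      funext w
      have hΦm : Φ (mkl l * PresentedMonoid.of (structRel g f) y) x
          = Φ (mkl l) (phi hf y x) := by
        rw [map_mul, Equiv.Perm.mul_apply, hΦ y]
        rfl
      have hvm : (Θ (mkl l * PresentedMonoid.of (structRel g f) y)).vec x
          = (Θ (mkl l)).vec (phi hf y x) + (if x = y then 1 else 0) := by
        rw [hvec_mul, hof_vec, hof_perm]
        rfl
      show (Ψ (mkl l * PresentedMonoid.of (structRel g f) y)) w x = _
      rw [map_mul, Matrix.mul_apply]
      have hsum : (∑ j, Ψ (mkl l) w j * Ψ (PresentedMonoid.of (structRel g f) y) j x)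
          = Ψ (mkl l) w (phi hf y x) * (if x = y then (-1 : ℝ) else 1) := by
        have : ∀ j, Ψ (mkl l) w j * Ψ (PresentedMonoid.of (structRel g f) y) j x
            = if j = phi hf y x then Ψ (mkl l) w j * (if x = y then (-1 : ℝ) else 1) else 0 := by
          intro j
          rw [hΨ y, hpsi_col]
          split_ifs <;> ring
        simp only [this, Finset.sum_ite_eq', Finset.mem_univ, if_true]
      rw [hsum, congrFun (ih (phi hf y x)) w, hvm, hΦm]
      simp only [Pi.smul_apply, smul_eq_mul]
      by_cases hxy : x = y <;>
        simp only [hxy, if_true, if_false, eq_self_iff_true, pow_succ, pow_zero, mul_one,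
          add_zero] <;>
        ring
  have hCLa : ∀ (a : PresentedMonoid (structRel g f)) (x : X), (fun w => Ψ a w x)
      = ((-1 : ℝ) ^ ((Θ a).vec x)) • (Pi.single (Φ a x) (1 : ℝ) : X → ℝ) := by
    intro a x
    obtain ⟨l, rfl⟩ := hsur a
    exact hCLl l x
  -- injectivity from the exponent data
  have hINJ : ∀ (k : ℕ) (a b : PresentedMonoid (structRel g f)), a ∣ Δ → b ∣ Δ →
      (∑ t, (Θ a).vec t) = k → (Θ a).vec = (Θ b).vec → a = b := by
    intro k
    induction k with
    | zero =>
      intro a b _ _ ha hab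
      obtain ⟨l, rfl⟩ := hsur a
      obtain ⟨m, rfl⟩ := hsur b
      have hb0 : (∑ t, (Θ (mkl m)).vec t) = 0 := by rw [← hab]; exact ha
      rw [hlen_mkl] at ha hb0
      rw [List.eq_nil_of_length_eq_zero ha, List.eq_nil_of_length_eq_zero hb0]
    | succ k ih =>
      intro a b haΔ hbΔ ha hab
      obtain ⟨l, rfl⟩ := hsur a
      rcases List.eq_nil_or_concat' l with rfl | ⟨l', y, rfl⟩
      · rw [hlen_mkl] at ha; simp at ha
      · rw [hmkl_app] at haΔ hab ⊢
        rw [hmkl_app, hlen_mul, hlen_of] at ha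
        have hb1 : 1 ≤ (Θ b).vec y := by
          have h2 := congrFun hab y
          have h1 := hRD2 (mkl l') y
          omega
        obtain ⟨b', hb'⟩ := hRD1 b y hb1
        have ha'Δ : mkl l' ∣ Δ :=
          dvd_trans ⟨PresentedMonoid.of (structRel g f) y, rfl⟩ haΔ
        have hb'Δ : b' ∣ Δ := dvd_trans ⟨PresentedMonoid.of (structRel g f) y, hb'⟩ hbΔ
        have hvec' : (Θ (mkl l')).vec = (Θ b').vec := by
          funext t
          have hA := congrFun hab ((phi hf y).symm t)
          rw [hvec_mul, hof_vec, hof_perm] at hA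
          have hB : (Θ b).vec ((phi hf y).symm t)
              = (Θ b').vec (phi hf y ((phi hf y).symm t)) + evec y ((phi hf y).symm t) := by
            rw [hb', hvec_mul, hof_vec, hof_perm]
          rw [hB, Equiv.apply_symm_apply] at hA
          omega
        have hlen' : (∑ t, (Θ (mkl l')).vec t) = k := by omega
        rw [ih (mkl l') b' ha'Δ hb'Δ hlen' hvec']
        exact hb'.symm
  -- final assembly
  refine ⟨?_, ?_⟩
  · intro a haΔ
    refine ⟨?_, ?_⟩
    · intro x
      by_cases hx : ∃ b, a = b * PresentedMonoid.of (structRel g f) x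
      · rw [if_pos hx]
        obtain ⟨b, hb⟩ := hx
        have h1 : (Θ a).vec x = 1 := by
          have h2 := hRD2 b x
          rw [← hb] at h2
          have h3 := hDdvd a haΔ x
          omega
        rw [hCLa a x, h1, pow_one, neg_smul, one_smul]
      · rw [if_neg hx]
        have h0 : (Θ a).vec x = 0 := by
          by_contra h
          exact hx (hRD1 a x (by omega))
        rw [hCLa a x, h0, pow_zero, one_smul]
    · intro w hw
      have hlw : (∑ t, (Θ a).vec t) = w.length := by
        rw [← hw]
        have h1 : PresentedMonoid.mk (structRel g f) w = mkl (FreeMonoid.toList w) := by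
          rw [hmkldef]
          simp [FreeMonoid.ofList_toList]
        rw [h1, hlen_mkl]
        rfl
      have hset : {x : X | ∀ z : X, (fun w' => Ψ a w' x) ≠ Pi.single z (1 : ℝ)}
          = {x : X | (Θ a).vec x = 1} := by
        ext x
        simp only [Set.mem_setOf_eq]
        constructor
        · intro hx
          have hle := hDdvd a haΔ x
          by_contra h
          have h0 : (Θ a).vec x = 0 := by omega
          exact hx (Φ a x) (by rw [hCLa a x, h0, pow_zero, one_smul])
        · intro h1 z heq
          rw [hCLa a x, h1, pow_one] at heq
          have h2 := congrFun heq (Φ a x)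
          simp only [Pi.smul_apply, Pi.single_eq_same, smul_eq_mul, mul_one] at h2
          rw [Pi.single_apply] at h2
          split_ifs at h2 <;> norm_num at h2
      unfold nneg
      rw [hset]
      have hfin : {x : X | (Θ a).vec x = 1}.ncard
          = Finset.card (Finset.univ.filter (fun x => (Θ a).vec x = 1)) := by
        rw [Set.ncard_eq_toFinset_card']
        congr 1
        ext x
        simp
      rw [hfin, Finset.card_filter, ← hlw]
      apply Finset.sum_congr rfl
      intro t _
      have := hDdvd a haΔ t
      split_ifs with h <;> omega
  · intro a b haΔ hbΔ hab
    apply hINJ (∑ t, (Θ a).vec t) a b haΔ hbΔ rfl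
    funext x
    have hca := hCLa a x
    have hcb := hCLa b x
    rw [hab] at hca
    have heq : ((-1 : ℝ) ^ ((Θ a).vec x)) • (Pi.single (Φ a x) (1 : ℝ) : X → ℝ)
        = ((-1 : ℝ) ^ ((Θ b).vec x)) • (Pi.single (Φ b x) (1 : ℝ) : X → ℝ) := hca.symm.trans hcb
    have hval := congrFun heq (Φ a x)
    simp only [Pi.smul_apply, Pi.single_eq_same, smul_eq_mul, mul_one] at hval
    rw [Pi.single_apply] at hval
    have hda := hDdvd a haΔ x
    have hdb := hDdvd b hbΔ x
    split_ifs at hval with h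
    · rw [mul_one] at hval
      rcases Nat.le_one_iff_eq_zero_or_eq_one.mp hda with h0 | h0 <;>
        rcases Nat.le_one_iff_eq_zero_or_eq_one.mp hdb with h1 | h1 <;>
          rw [h0, h1] <;> rw [h0, h1] at hval <;> norm_num at hval
    · rw [mul_zero] at hval
      exact absurd hval (pow_ne_zero _ (by norm_num))


open scoped Classical in
/-- if `a` divides the Garside element `Δ`, then for every `x ∈ X` the column of
`ψ_a` at `x` is `-φ_a(x)` if `x` right-divides `a` and `φ_a(x)` otherwise; consequently
`n(ψ_a) = ℓ(a)`, and `ψ` is injective on the set of divisors of `Δ`. -/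
theorem stmt_12 {X : Type*} [Fintype X] [DecidableEq X] [Nonempty X]
    (S : X × X → X × X) (g f : X → X → X)
    (hS : ∀ x y : X, S (x, y) = (g x y, f y x))
    (hg : ∀ x : X, Function.Bijective (g x))
    (hf : ∀ x : X, Function.Bijective (f x))
    (hinv : ∀ p : X × X, S (S p) = p)
    (hbr : Braided S)
    (Δ : PresentedMonoid (structRel g f))
    (hΔdvd : ∀ x : X, PresentedMonoid.of (structRel g f) x ∣ Δ)
    (hΔlcm : ∀ m : PresentedMonoid (structRel g f),
      (∀ x : X, PresentedMonoid.of (structRel g f) x ∣ m) → Δ ∣ m)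
    (Φ : PresentedMonoid (structRel g f) →* Equiv.Perm X)
    (hΦ : ∀ x : X, Φ (PresentedMonoid.of (structRel g f) x)
      = (Equiv.ofBijective (f x) (hf x)).symm)
    (Ψ : PresentedMonoid (structRel g f) →* Matrix X X ℝ)
    (hΨ : ∀ x : X, Ψ (PresentedMonoid.of (structRel g f) x) = psiMat f x) :
    (∀ a : PresentedMonoid (structRel g f), a ∣ Δ →
        (∀ x : X, (fun w => Ψ a w x) =
          (if ∃ b, a = b * PresentedMonoid.of (structRel g f) x then
            -(Pi.single (Φ a x) (1 : ℝ)) else Pi.single (Φ a x) (1 : ℝ))) ∧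
        ∀ w : FreeMonoid X, PresentedMonoid.mk (structRel g f) w = a →
          nneg (Ψ a) = w.length) ∧
      ∀ a b : PresentedMonoid (structRel g f), a ∣ Δ → b ∣ Δ → Ψ a = Ψ b → a = b :=
  stmt_12' S g f hS hg hf hinv hbr Δ hΔdvd hΔlcm Φ hΦ Ψ hΨ
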